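/- Let A be a coherent commutative ring, M a finitely presented A-module, and N a finitely presented A-module. Then for every n ≥ 0, the module Ext^n_A(M, N) is a finitely presented A-module. -/

import Mathlib

/-!
STATEMENT 3: Over a coherent commutative ring `A`, if `M` and `N` are finitely presented
`A`-modules then `Ext^n_A(M, N)` is a finitely presented `A`-module for every `n ≥ 0`.
-/

universe u

-- L1: a finite module injecting into a finite free module is f.p.
theorem L1 (A : Type u) [CommRing A]
    (hcoh : ∀ I : Ideal A, I.FG → Module.FinitePresentation A I)
    (k : ℕ) : ∀ (P : Type u) [AddCommGroup P] [Module A P] [Module.Finite A P]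
    (f : P →ₗ[A] (Fin k → A)), Function.Injective f → Module.FinitePresentation A P := by
  induction k with
  | zero =>
    intro P _ _ _ f hf
    have h0 : ∀ x : P, x = 0 := by intro x; apply hf; apply Subsingleton.elim
    refine Module.finitePresentation_of_surjective (0 : (Fin 0 → A) →ₗ[A] P)
      (fun x => ⟨0, (h0 x).symm⟩) ?_
    rw [LinearMap.ker_zero]
    exact Module.Finite.fg_top
  | succ k ih =>
    intro P _ _ _ f hf
    set q : P →ₗ[A] A := (LinearMap.proj (Fin.last k)).comp f with hq
    have hIfg : (LinearMap.range q).FG := by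
      rw [LinearMap.range_eq_map]
      exact (Module.Finite.fg_top (R := A) (M := P)).map q
    have hIfp : Module.FinitePresentation A (LinearMap.range q) := hcoh _ hIfg
    have hsurj : Function.Surjective q.rangeRestrict := LinearMap.surjective_rangeRestrict q
    have hK : (LinearMap.ker q.rangeRestrict).FG :=
      Module.FinitePresentation.fg_ker _ hsurj
    have : Module.Finite A (LinearMap.ker q.rangeRestrict) :=
      Module.Finite.iff_fg.mpr hK
    have hfpker : Module.FinitePresentation A (LinearMap.ker q.rangeRestrict) := by
      refine ih _ (LinearMap.pi (fun i : Fin k =>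
        ((LinearMap.proj i.castSucc).comp f).comp (LinearMap.ker q.rangeRestrict).subtype)) ?_
      intro x y hxy
      have hker : ∀ z : LinearMap.ker q.rangeRestrict, q z = 0 := by
        intro z
        have hz := z.2
        rw [LinearMap.mem_ker] at hz
        exact congrArg Subtype.val hz
      apply Subtype.ext
      apply hf
      funext i
      refine Fin.lastCases ?_ (fun j => ?_) i
      · have hx := hker x; have hy := hker y
        simp only [hq, LinearMap.comp_apply, LinearMap.proj_apply] at hx hy
        rw [hx, hy]
      · have := congrFun hxy j
        simpa using this
    exact Module.finitePresentation_of_ker q.rangeRestrict hsurj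

-- L2: a f.g. submodule of a f.p. module is f.p.
theorem L2 (A : Type u) [CommRing A]
    (hcoh : ∀ I : Ideal A, I.FG → Module.FinitePresentation A I)
    (M : Type u) [AddCommGroup M] [Module A M] [Module.FinitePresentation A M]
    (S : Submodule A M) (hS : S.FG) : Module.FinitePresentation A S := by
  obtain ⟨m, p, hp⟩ := Module.Finite.exists_fin' A M
  have hker : (LinearMap.ker p).FG := Module.FinitePresentation.fg_ker p hp
  set S' : Submodule A (Fin m → A) := S.comap p with hS'
  have hle : LinearMap.ker p ≤ S' := fun x hx => by
    simp only [hS', Submodule.mem_comap, LinearMap.mem_ker.mp hx]; exact S.zero_mem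
  have hS'fg : S'.FG := by
    refine Submodule.fg_of_fg_map_of_fg_inf_ker p ?_ ?_
    · rwa [Submodule.map_comap_eq_of_surjective hp]
    · rwa [inf_eq_right.mpr hle]
  have : Module.Finite A S' := Module.Finite.iff_fg.mpr hS'fg
  have hfpS' : Module.FinitePresentation A S' := L1 A hcoh m S' S'.subtype Subtype.val_injective
  set l : S' →ₗ[A] S := p.restrict (fun x hx => hx) with hl
  have hlsurj : Function.Surjective l := by
    rintro ⟨s, hs⟩
    obtain ⟨x, rfl⟩ := hp s
    exact ⟨⟨x, hs⟩, rfl⟩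
  have hlker : (LinearMap.ker l).FG := by
    set incl : LinearMap.ker p →ₗ[A] S' :=
      LinearMap.codRestrict S' (LinearMap.ker p).subtype (fun x => hle x.2) with hincl
    have hrange : LinearMap.range incl = LinearMap.ker l := by
      ext x
      constructor
      · rintro ⟨y, rfl⟩
        apply LinearMap.mem_ker.mpr
        apply Subtype.ext
        exact y.2
      · intro hx
        refine ⟨⟨x.val, ?_⟩, Subtype.ext rfl⟩
        exact congrArg Subtype.val (LinearMap.mem_ker.mp hx)
    rw [← hrange, LinearMap.range_eq_map]
    have : Module.Finite A (LinearMap.ker p) := Module.Finite.iff_fg.mpr hker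
    exact (Module.Finite.fg_top (R := A) (M := LinearMap.ker p)).map incl
  exact Module.finitePresentation_of_surjective l hlsurj hlker

-- L3: kernel of a map between f.p. modules is f.p. (and f.g.)
theorem L3fg (A : Type u) [CommRing A]
    (hcoh : ∀ I : Ideal A, I.FG → Module.FinitePresentation A I)
    (M N : Type u) [AddCommGroup M] [Module A M] [Module.FinitePresentation A M]
    [AddCommGroup N] [Module A N] [Module.FinitePresentation A N]
    (f : M →ₗ[A] N) : (LinearMap.ker f).FG := by
  have hrfg : (LinearMap.range f).FG := by
    rw [LinearMap.range_eq_map]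
    exact (Module.Finite.fg_top (R := A) (M := M)).map f
  have : Module.FinitePresentation A (LinearMap.range f) := L2 A hcoh N _ hrfg
  have := Module.FinitePresentation.fg_ker f.rangeRestrict (LinearMap.surjective_rangeRestrict f)
  rwa [LinearMap.ker_rangeRestrict] at this

theorem L3 (A : Type u) [CommRing A]
    (hcoh : ∀ I : Ideal A, I.FG → Module.FinitePresentation A I)
    (M N : Type u) [AddCommGroup M] [Module A M] [Module.FinitePresentation A M]
    [AddCommGroup N] [Module A N] [Module.FinitePresentation A N]
    (f : M →ₗ[A] N) : Module.FinitePresentation A (LinearMap.ker f) :=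
  L2 A hcoh M _ (L3fg A hcoh M N f)

-- quotient of f.p. by f.g. is f.p.
theorem L4 (A : Type u) [CommRing A]
    (M : Type u) [AddCommGroup M] [Module A M] [Module.FinitePresentation A M]
    (S : Submodule A M) (hS : S.FG) : Module.FinitePresentation A (M ⧸ S) :=
  Module.finitePresentation_of_surjective S.mkQ (Submodule.mkQ_surjective S)
    (by rwa [Submodule.ker_mkQ])

open CategoryTheory

section Resolution

variable (A : Type u) [CommRing A]

/-- A bundled finitely presented module. -/
structure BFP where
  carrier : Type u
  [acg : AddCommGroup carrier]
  [mod : Module A carrier]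
  [fp : Module.FinitePresentation A carrier]

attribute [instance] BFP.acg BFP.mod BFP.fp

variable {A}

/-- choice of finite free cover -/
noncomputable def BFP.k (S : BFP A) : ℕ :=
  (Module.Finite.exists_fin' A S.carrier).choose

noncomputable def BFP.p (S : BFP A) : (Fin S.k → A) →ₗ[A] S.carrier :=
  (Module.Finite.exists_fin' A S.carrier).choose_spec.choose

theorem BFP.p_surj (S : BFP A) : Function.Surjective S.p :=
  (Module.Finite.exists_fin' A S.carrier).choose_spec.choose_spec

/-- the syzygy step -/
noncomputable def BFP.step (hcoh : ∀ I : Ideal A, I.FG → Module.FinitePresentation A I)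
    (S : BFP A) : BFP A :=
  @BFP.mk A _ (LinearMap.ker S.p) _ _ (L3 A hcoh _ _ S.p)

variable (hcoh : ∀ I : Ideal A, I.FG → Module.FinitePresentation A I)
variable (M : Type u) [AddCommGroup M] [Module A M] [Module.FinitePresentation A M]

/-- the sequence of syzygies -/
noncomputable def seq : ℕ → BFP A
  | 0 => ⟨M⟩
  | n + 1 => (seq n).step hcoh

theorem seq_succ_carrier (n : ℕ) :
    (seq hcoh M (n + 1)).carrier = LinearMap.ker (seq hcoh M n).p := rfl

/-- the free modules of the resolution -/
noncomputable def F (n : ℕ) : ModuleCat.{u} A := ModuleCat.of A (Fin (seq hcoh M n).k → A)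

/-- the differentials -/
noncomputable def dd (n : ℕ) : F hcoh M (n + 1) ⟶ F hcoh M n :=
  ModuleCat.ofHom ((LinearMap.ker (seq hcoh M n).p).subtype.comp (seq hcoh M (n + 1)).p)

theorem dd_sq (n : ℕ) : dd hcoh M (n + 1) ≫ dd hcoh M n = 0 := by
  apply ModuleCat.hom_ext
  apply LinearMap.ext
  intro x
  have h : (seq hcoh M (n + 1)).p ((LinearMap.ker (seq hcoh M (n+1)).p).subtype
      ((seq hcoh M (n + 2)).p x)) = 0 := ((seq hcoh M (n + 2)).p x).2
  change (LinearMap.ker (seq hcoh M n).p).subtype ((seq hcoh M (n+1)).p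
    ((LinearMap.ker (seq hcoh M (n+1)).p).subtype ((seq hcoh M (n + 2)).p x))) = 0
  rw [h]
  rfl

/-- the resolution complex -/
noncomputable def rescomplex : ChainComplex (ModuleCat.{u} A) ℕ :=
  ChainComplex.of (F hcoh M) (dd hcoh M) (dd_sq hcoh M)

end Resolution

section Res2
variable (A : Type u) [CommRing A]
variable (hcoh : ∀ I : Ideal A, I.FG → Module.FinitePresentation A I)
variable (M : Type u) [AddCommGroup M] [Module A M] [Module.FinitePresentation A M]

theorem rescomplex_d (n : ℕ) : (rescomplex hcoh M).d (n + 1) n = dd hcoh M n :=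
  ChainComplex.of_d _ _ n

theorem d10_p0 : (rescomplex hcoh M).d 1 0 ≫ ModuleCat.ofHom (seq hcoh M 0).p = 0 := by
  rw [rescomplex_d]
  apply ModuleCat.hom_ext
  apply LinearMap.ext
  intro x
  exact ((seq hcoh M 1).p x).2

noncomputable def resolution : ProjectiveResolution (ModuleCat.of A M) where
  complex := rescomplex hcoh M
  projective n := ModuleCat.projective_of_free
    (M := (rescomplex hcoh M).X n) (Pi.basisFun A (Fin (seq hcoh M n).k))
  π := (ChainComplex.toSingle₀Equiv _ _).symm
    ⟨ModuleCat.ofHom (seq hcoh M 0).p, d10_p0 A hcoh M⟩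
  quasiIso := ⟨fun n => by
    cases n with
    | zero =>
      rw [ChainComplex.quasiIsoAt₀_iff, ShortComplex.quasiIso_iff_of_zeros']
      rotate_left
      · rfl
      · rfl
      · rfl
      constructor
      · rw [ShortComplex.moduleCat_exact_iff]
        intro x hx
        dsimp only [HomologicalComplex.shortComplexFunctor'] at hx ⊢
        have hxk : x ∈ LinearMap.ker (seq hcoh M 0).p := hx
        obtain ⟨y, hy⟩ := (seq hcoh M 1).p_surj ⟨x, hxk⟩
        exact ⟨y, (congrArg (fun f : (rescomplex hcoh M).X 1 ⟶ (rescomplex hcoh M).X 0 => f.hom y) (rescomplex_d A hcoh M 0)).trans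
          (congrArg Subtype.val hy)⟩
      · show CategoryTheory.Epi ((((rescomplex hcoh M).toSingle₀Equiv
          (ModuleCat.of A M)).symm ⟨ModuleCat.ofHom (seq hcoh M 0).p, d10_p0 A hcoh M⟩).f 0)
        rw [ModuleCat.epi_iff_surjective]
        exact (seq hcoh M 0).p_surj
    | succ n =>
      rw [quasiIsoAt_iff_exactAt']
      · rw [HomologicalComplex.exactAt_iff' _ (n + 2) (n + 1) n (by simp) (by simp)]
        rw [ShortComplex.moduleCat_exact_iff]
        intro x hx
        dsimp only [HomologicalComplex.sc', HomologicalComplex.shortComplexFunctor'] at hx ⊢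
        rw [rescomplex_d] at hx
        rw [rescomplex_d]
        have hxk : x ∈ LinearMap.ker (seq hcoh M (n + 1)).p := by
          show (seq hcoh M (n + 1)).p x = 0
          apply Subtype.ext
          exact hx
        obtain ⟨y, hy⟩ := (seq hcoh M (n + 2)).p_surj ⟨x, hxk⟩
        exact ⟨y, congrArg Subtype.val hy⟩
      · apply ChainComplex.exactAt_succ_single_obj⟩
end Res2

section Final
variable (A : Type u) [CommRing A]

theorem fp_equiv (M N : Type u) [AddCommGroup M] [Module A M] [AddCommGroup N] [Module A N]
    [Module.FinitePresentation A M] (e : M ≃ₗ[A] N) : Module.FinitePresentation A N :=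
  Module.finitePresentation_of_surjective e.toLinearMap e.surjective
    (by rw [LinearMap.ker_eq_bot.mpr e.injective]; exact Submodule.fg_bot)

theorem fp_pi (k : ℕ) (N : Type u) [AddCommGroup N] [Module A N]
    [Module.FinitePresentation A N] : Module.FinitePresentation A (Fin k → N) := by
  obtain ⟨m, p, hp⟩ := Module.Finite.exists_fin' A N
  have hker : (LinearMap.ker p).FG := Module.FinitePresentation.fg_ker p hp
  haveI : Module.FinitePresentation A (Fin k → Fin m → A) :=
    Module.finitePresentation_of_projective _ _
  refine Module.finitePresentation_of_surjective (p.compLeft (Fin k))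
    (fun g => ?_) ?_
  · choose f hf using fun i => hp (g i)
    exact ⟨f, funext hf⟩
  · have : LinearMap.ker (p.compLeft (Fin k)) =
        Submodule.pi Set.univ (fun _ : Fin k => LinearMap.ker p) := by
      ext g
      simp [LinearMap.mem_ker, Submodule.mem_pi, funext_iff]
    rw [this]
    exact Submodule.fg_pi (fun _ => hker)

theorem fp_hom (hcoh : ∀ I : Ideal A, I.FG → Module.FinitePresentation A I)
    (k : ℕ) (N : Type u) [AddCommGroup N] [Module A N] [Module.FinitePresentation A N] :
    Module.FinitePresentation A ((Fin k → A) →ₗ[A] N) := by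
  have := fp_pi A k N
  exact fp_equiv A (Fin k → N) _ (LinearEquiv.piRing A N (Fin k) A).symm

end Final

theorem ext_finitePresentation_of_coherent
    (A : Type u) [CommRing A]
    (hcoh : ∀ I : Ideal A, I.FG → Module.FinitePresentation A I)
    (M N : Type u) [AddCommGroup M] [Module A M] [AddCommGroup N] [Module A N]
    [Module.FinitePresentation A M] [Module.FinitePresentation A N] (n : ℕ) :
    Module.FinitePresentation A
      (((Ext A (ModuleCat.{u} A) n).obj (Opposite.op (ModuleCat.of A M))).obj
        (ModuleCat.of A N)) := by
  set P := resolution A hcoh M with hP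
  set K := P.complex.linearYonedaObj A (ModuleCat.of A N) with hK
  set S := K.sc n with hS
  have hX : ∀ i : ℕ, Module.FinitePresentation A (K.X i) := fun i => by
    have := fp_hom A hcoh (seq hcoh M i).k N
    exact fp_equiv A ((Fin (seq hcoh M i).k → A) →ₗ[A] N) (K.X i)
      (ModuleCat.homLinearEquiv (M := F hcoh M i) (N := ModuleCat.of A N) (S := A)).symm
  haveI h1 : Module.FinitePresentation A S.X₁ := hX ((ComplexShape.up ℕ).prev n)
  haveI h2 : Module.FinitePresentation A S.X₂ := hX n
  haveI h3 : Module.FinitePresentation A S.X₃ := hX ((ComplexShape.up ℕ).next n)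
  haveI hker : Module.FinitePresentation A (LinearMap.ker S.g.hom) := L3 A hcoh _ _ S.g.hom
  have hrange : (LinearMap.range S.moduleCatToCycles).FG := by
    rw [LinearMap.range_eq_map]
    exact (Module.Finite.fg_top (R := A) (M := S.X₁)).map _
  have hH : Module.FinitePresentation A S.moduleCatLeftHomologyData.H := L4 A (LinearMap.ker S.g.hom) _ hrange
  have e : (((Ext A (ModuleCat.{u} A) n).obj (Opposite.op (ModuleCat.of A M))).obj
      (ModuleCat.of A N)) ≃ₗ[A] S.moduleCatLeftHomologyData.H :=
    (P.isoExt n (ModuleCat.of A N) ≪≫ S.moduleCatHomologyIso).toLinearEquiv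
  exact fp_equiv A S.moduleCatLeftHomologyData.H _ e.symm
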